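/- Let S ⊆ ℕ^d be a GNS with minimal generating set G(S), fundamental holes M(S)*, embedded in ℕ^{d+1} avoiding coordinate i, and let T^k(S,i) = S ∪ (e_i + S) ∪ ... ∪ (k·e_i + S) ∪ ((k+1)e_i + ℕ^{d+1}) be its k-thickening along axis i. Then the minimal generating set of T^k(S,i) is {e_i} ∪ G(S) ∪ ((k+1)e_i + M(S)*). -/
import Mathlib


/-- The minimal generating set of a GNS: `G(S) = S* \ (S* + S*)`. -/
def gensSet {d : ℕ} (S : Set (Fin d → ℕ)) : Set (Fin d → ℕ) :=
  (S \ {0}) \ {x | ∃ a ∈ S \ {0}, ∃ b ∈ S \ {0}, x = a + b}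

/-- The fundamental holes `M(S)*` of `S`: holes below which the only element of `S` is `0`. -/
def MStar {d : ℕ} (S : Set (Fin d → ℕ)) : Set (Fin d → ℕ) :=
  {h | h ∈ Sᶜ ∧ ∀ s ∈ S, s ≤ h → s = 0}

/-- The embedding of `ℕ^d` into `ℕ^{d+1}` avoiding coordinate `i`. -/
def emb {d : ℕ} (i : Fin (d + 1)) (s : Fin d → ℕ) : Fin (d + 1) → ℕ :=
  i.insertNth 0 s

/-- The `k`-thickening of `S ⊆ ℕ^d` along axis `i` in `ℕ^{d+1}`:
`T^k(S,i) = S ∪ (e_i + S) ∪ ⋯ ∪ (k·e_i + S) ∪ ((k+1)·e_i + ℕ^{d+1})`. -/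
def thick {d : ℕ} (S : Set (Fin d → ℕ)) (k : ℕ) (i : Fin (d + 1)) :
    Set (Fin (d + 1) → ℕ) :=
  {x | ∃ j ≤ k, ∃ s ∈ S, x = j • Pi.single i 1 + emb i s} ∪
  {x | ∃ y : Fin (d + 1) → ℕ, x = (k + 1) • Pi.single i 1 + y}

lemma key {d : ℕ} (i : Fin (d+1)) (j : ℕ) (s : Fin d → ℕ) :
    j • Pi.single i 1 + emb i s = i.insertNth j s := by
  funext l
  rcases eq_or_ne l i with rfl | h
  · simp [emb]
  · obtain ⟨m, rfl⟩ := Fin.exists_succAbove_eq h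
    simp [emb, Fin.insertNth_apply_succAbove, Pi.single_eq_of_ne (Fin.succAbove_ne i m)]

lemma decomp {d : ℕ} (i : Fin (d+1)) (x : Fin (d+1) → ℕ) :
    x = (x i) • Pi.single i 1 + emb i (i.removeNth x) := by
  rw [key]; exact (Fin.insertNth_self_removeNth i x).symm

lemma emb_i {d : ℕ} (i : Fin (d+1)) (s : Fin d → ℕ) : emb i s i = 0 := by simp [emb]

lemma rm_emb {d : ℕ} (i : Fin (d+1)) (s : Fin d → ℕ) : i.removeNth (emb i s) = s := by simp [emb]

lemma smul_i {d : ℕ} (i : Fin (d+1)) (j : ℕ) : (j • Pi.single i 1 : Fin (d+1) → ℕ) i = j := by simp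

lemma rm_smul {d : ℕ} (i : Fin (d+1)) (j : ℕ) :
    i.removeNth (j • Pi.single i 1 : Fin (d+1) → ℕ) = 0 := by
  funext m; simp [Fin.removeNth, Pi.single_eq_of_ne (Fin.succAbove_ne i m)]

lemma rm_add {d : ℕ} (i : Fin (d+1)) (a b : Fin (d+1) → ℕ) :
    i.removeNth (a + b) = i.removeNth a + i.removeNth b := rfl

lemma emb_zero {d : ℕ} (i : Fin (d+1)) : emb i (0 : Fin d → ℕ) = 0 := by
  funext l
  rcases eq_or_ne l i with rfl | h
  · simp [emb]
  · obtain ⟨m, rfl⟩ := Fin.exists_succAbove_eq h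
    simp [emb, Fin.insertNth_apply_succAbove]

lemma emb_add {d : ℕ} (i : Fin (d+1)) (a b : Fin d → ℕ) :
    emb i (a + b) = emb i a + emb i b := by
  funext l
  rcases eq_or_ne l i with rfl | h
  · simp [emb]
  · obtain ⟨m, rfl⟩ := Fin.exists_succAbove_eq h
    simp [emb, Fin.insertNth_apply_succAbove]

lemma eq_zero_iff {d : ℕ} (i : Fin (d+1)) (x : Fin (d+1) → ℕ) :
    x = 0 ↔ x i = 0 ∧ i.removeNth x = 0 := by
  constructor
  · rintro rfl
    exact ⟨rfl, rfl⟩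
  · rintro ⟨h1, h2⟩
    rw [decomp i x, h1, h2, emb_zero]
    simp

lemma mem_thick {d : ℕ} {S : Set (Fin d → ℕ)} {k : ℕ} {i : Fin (d+1)} {x : Fin (d+1) → ℕ} :
    x ∈ thick S k i ↔ (x i ≤ k ∧ i.removeNth x ∈ S) ∨ k + 1 ≤ x i := by
  unfold thick
  constructor
  · rintro (⟨j, hj, s, hs, rfl⟩ | ⟨y, rfl⟩)
    · left
      constructor
      · simp [smul_i, emb_i]; omega
      · rw [rm_add, rm_smul, rm_emb]; simpa using hs
    · right; simp [smul_i]
  · rintro (⟨h1, h2⟩ | h)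
    · exact Or.inl ⟨x i, h1, i.removeNth x, h2, decomp i x⟩
    · refine Or.inr ⟨x - (k+1) • Pi.single i 1, ?_⟩
      funext l
      rcases eq_or_ne l i with rfl | hl
      · simp; omega
      · simp [Pi.single_eq_of_ne hl]


lemma app_i {d : ℕ} (i : Fin (d+1)) (j : ℕ) (s : Fin d → ℕ) :
    (j • Pi.single i 1 + emb i s : Fin (d+1) → ℕ) i = j := by
  rw [Pi.add_apply, smul_i, emb_i, add_zero]

lemma split_smul {d : ℕ} (a : Fin d → ℕ) (n : ℕ) (h : 1 ≤ n) :
    n • a = a + (n - 1) • a := by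
  obtain ⟨m, rfl⟩ := Nat.exists_eq_add_of_le h
  rw [add_nsmul, one_nsmul, Nat.add_sub_cancel_left]

/-- the minimal generating set of the `k`-thickening `T^k(S,i)` is
`{e_i} ∪ G(S) ∪ ((k+1)·e_i + M(S)*)`. -/
theorem stmt6 {d : ℕ} (S : Set (Fin d → ℕ))
    (h0 : 0 ∈ S) (hadd : ∀ a ∈ S, ∀ b ∈ S, a + b ∈ S) (hfin : Sᶜ.Finite)
    (k : ℕ) (i : Fin (d + 1)) :
    gensSet (thick S k i) =
      {Pi.single i 1} ∪ (emb i '' gensSet S) ∪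
        ((fun m => (k + 1) • Pi.single i 1 + emb i m) '' MStar S) := by
  classical
  have hsingle_ne : (Pi.single i 1 : Fin (d+1) → ℕ) ≠ 0 := by
    intro h; simpa using congrFun h i
  have hei : (Pi.single i 1 : Fin (d+1) → ℕ) ∈ thick S k i := by
    rw [mem_thick]
    rcases Nat.eq_zero_or_pos k with rfl | hk
    · right; simp
    · left
      constructor
      · simp; omega
      · have : (Pi.single i 1 : Fin (d+1) → ℕ) = (1:ℕ) • Pi.single i 1 := by simp
        rw [this, rm_smul]; exact h0
  have hrm_single : i.removeNth (Pi.single i 1 : Fin (d+1) → ℕ) = 0 := by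
    have : (Pi.single i 1 : Fin (d+1) → ℕ) = (1:ℕ) • Pi.single i 1 := by simp
    rw [this, rm_smul]
  ext x
  simp only [gensSet, Set.mem_diff, Set.mem_setOf_eq, Set.mem_singleton_iff,
    Set.mem_union, Set.mem_image]
  constructor
  · rintro ⟨⟨hxT, hx0⟩, hirr⟩
    rw [mem_thick] at hxT
    rcases Nat.lt_or_ge (x i) (k+1) with hj | hj
    · -- x i ≤ k
      have hxk : x i ≤ k := by omega
      have hmS : i.removeNth x ∈ S := by
        rcases hxT with ⟨_, h⟩ | h
        · exact h
        · omega
      rcases Nat.eq_zero_or_pos (x i) with hx0' | hpos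
      · -- x = emb m, m ∈ gensSet S
        have hxe : x = emb i (i.removeNth x) := by
          conv_lhs => rw [decomp i x]
          rw [hx0']; simp
        have hm0 : i.removeNth x ≠ 0 := by
          intro h; exact hx0 ((eq_zero_iff i x).mpr ⟨hx0', h⟩)
        left; right
        refine ⟨i.removeNth x, ⟨⟨hmS, hm0⟩, ?_⟩, hxe.symm⟩
        rintro ⟨a, ⟨haS, ha0⟩, b, ⟨hbS, hb0⟩, hab⟩
        refine hirr ⟨emb i a, ⟨?_, ?_⟩, emb i b, ⟨?_, ?_⟩, ?_⟩
        · rw [mem_thick]; left; rw [emb_i, rm_emb]; exact ⟨Nat.zero_le _, haS⟩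
        · intro h; exact ha0 (by rw [← rm_emb i a, h]; rfl)
        · rw [mem_thick]; left; rw [emb_i, rm_emb]; exact ⟨Nat.zero_le _, hbS⟩
        · intro h; exact hb0 (by rw [← rm_emb i b, h]; rfl)
        · rw [hxe, hab, emb_add]
      · -- 1 ≤ x i ≤ k : x must be e_i
        have hk1 : 1 ≤ k := by omega
        by_cases hx1 : x = Pi.single i 1
        · left; left; exact hx1
        exfalso
        apply hirr
        refine ⟨Pi.single i 1, ⟨hei, hsingle_ne⟩,
          (x i - 1) • Pi.single i 1 + emb i (i.removeNth x), ⟨?_, ?_⟩, ?_⟩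
        · rw [mem_thick]; left
          constructor
          · simp [emb_i]; omega
          · rw [rm_add, rm_smul, rm_emb, zero_add]; exact hmS
        · intro h
          have h2 : i.removeNth x = 0 := by
            have := congrArg (i.removeNth) h
            rwa [rm_add, rm_smul, rm_emb, zero_add] at this
          have h1 : x i - 1 = 0 := by
            have h' := congrFun h i
            rw [app_i] at h'
            simpa using h' 
          apply hx1
          rw [decomp i x, h2, emb_zero, add_zero]
          have hxe1 : x i = 1 := by omega
          rw [hxe1, one_smul]
        · conv_lhs => rw [decomp i x]
          rw [← add_assoc]
          congr 1
          exact split_smul _ _ (by omega)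
    · -- x i ≥ k+1
      rcases Nat.lt_or_ge (k+1) (x i) with hj2 | hj2
      · -- x i ≥ k+2 : reducible, contradiction
        exfalso
        apply hirr
        refine ⟨Pi.single i 1, ⟨hei, hsingle_ne⟩, x - Pi.single i 1, ⟨?_, ?_⟩, ?_⟩
        · rw [mem_thick]; right; simp; omega
        · intro h
          have := congrFun h i
          simp at this
          omega
        · funext l
          rcases eq_or_ne l i with rfl | hl
          · simp; omega
          · simp [Pi.single_eq_of_ne hl]
      · -- x i = k+1
        have hxi : x i = k + 1 := by omega
        have hxd : x = (k+1) • Pi.single i 1 + emb i (i.removeNth x) := by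
          conv_lhs => rw [decomp i x]; rw [hxi]
        by_cases hmS : i.removeNth x ∈ S
        · -- reducible unless k = 0 and m = 0
          by_cases hm0 : i.removeNth x = 0
          · rcases Nat.eq_zero_or_pos k with rfl | hk
            · left; left
              rw [hxd, hm0, emb_zero]; simp
            · exfalso; apply hirr
              refine ⟨Pi.single i 1, ⟨hei, hsingle_ne⟩,
                k • Pi.single i 1, ⟨?_, ?_⟩, ?_⟩
              · rw [mem_thick]; left; rw [smul_i, rm_smul]; exact ⟨le_refl _, h0⟩
              · intro h
                have := congrFun h i
                simp at this; omega
              · rw [hxd, hm0, emb_zero, add_zero]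
                simpa using split_smul (Pi.single i 1) (k+1) (by omega)
          · exfalso; apply hirr
            refine ⟨(k+1) • Pi.single i 1, ⟨?_, ?_⟩, emb i (i.removeNth x), ⟨?_, ?_⟩, hxd⟩
            · rw [mem_thick]; right; rw [smul_i]
            · intro h
              have := congrFun h i
              simp at this
            · rw [mem_thick]; left; rw [emb_i, rm_emb]; exact ⟨Nat.zero_le _, hmS⟩
            · intro h; exact hm0 (by rw [← rm_emb i (i.removeNth x), h]; rfl)
        · -- m ∉ S : m ∈ MStar
          right
          refine ⟨i.removeNth x, ⟨hmS, ?_⟩, hxd.symm⟩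
          intro s hsS hsle
          by_contra hs0
          apply hirr
          refine ⟨emb i s, ⟨?_, ?_⟩,
            (k+1) • Pi.single i 1 + emb i (i.removeNth x - s), ⟨?_, ?_⟩, ?_⟩
          · rw [mem_thick]; left; rw [emb_i, rm_emb]; exact ⟨Nat.zero_le _, hsS⟩
          · intro h; exact hs0 (by rw [← rm_emb i s, h]; rfl)
          · rw [mem_thick]; right
            simp [emb_i]
          · intro h
            have := congrFun h i
            rw [app_i] at this
            simp at this
          · have hms : s + (i.removeNth x - s) = i.removeNth x := by
              funext l
              have hsl : s l ≤ i.removeNth x l := hsle l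
              simp only [Pi.add_apply, Pi.sub_apply]
              omega
            calc x = (k+1) • Pi.single i 1 + emb i (i.removeNth x) := hxd
              _ = (k+1) • Pi.single i 1 + emb i (s + (i.removeNth x - s)) := by rw [hms]
              _ = emb i s + ((k+1) • Pi.single i 1 + emb i (i.removeNth x - s)) := by
                  rw [emb_add]; abel
  · rintro ((rfl | ⟨g, hg, rfl⟩) | ⟨m, hm, rfl⟩)
    · -- e_i
      refine ⟨⟨hei, hsingle_ne⟩, ?_⟩
      rintro ⟨a, ⟨haT, ha0⟩, b, ⟨hbT, hb0⟩, hab⟩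
      rw [mem_thick] at haT hbT
      have hic := congrFun hab i
      simp at hic
      have hrc : i.removeNth a + i.removeNth b = 0 := by
        rw [← rm_add, ← hab, hrm_single]
      have hrb : i.removeNth b = 0 := by
        funext l
        have := congrFun hrc l
        simp [Fin.removeNth] at this ⊢
        omega
      have hra' : i.removeNth a = 0 := by
        funext l
        have := congrFun hrc l
        simp [Fin.removeNth] at this ⊢
        omega
      rcases Nat.eq_zero_or_pos (a i) with ha | ha
      · exact ha0 ((eq_zero_iff i a).mpr ⟨ha, hra'⟩)
      · have : b i = 0 := by omega
        exact hb0 ((eq_zero_iff i b).mpr ⟨this, hrb⟩)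
    · -- emb g
      obtain ⟨⟨hgS, hg0⟩, hgirr⟩ := hg
      refine ⟨⟨?_, ?_⟩, ?_⟩
      · rw [mem_thick]; left; rw [emb_i, rm_emb]; exact ⟨Nat.zero_le _, hgS⟩
      · intro h; exact hg0 (by rw [← rm_emb i g, h]; rfl)
      · rintro ⟨a, ⟨haT, ha0⟩, b, ⟨hbT, hb0⟩, hab⟩
        rw [mem_thick] at haT hbT
        have hic := congrFun hab i
        rw [emb_i] at hic
        have hai : a i = 0 := by simp at hic; omega
        have hbi : b i = 0 := by simp at hic; omega
        have haS : i.removeNth a ∈ S := by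
          rcases haT with ⟨_, h⟩ | h; exact h; omega
        have hbS : i.removeNth b ∈ S := by
          rcases hbT with ⟨_, h⟩ | h; exact h; omega
        apply hgirr
        refine ⟨i.removeNth a, ⟨haS, ?_⟩, i.removeNth b, ⟨hbS, ?_⟩, ?_⟩
        · intro h; exact ha0 ((eq_zero_iff i a).mpr ⟨hai, h⟩)
        · intro h; exact hb0 ((eq_zero_iff i b).mpr ⟨hbi, h⟩)
        · rw [← rm_emb i g, hab, rm_add]
    · -- (k+1) e_i + emb m
      obtain ⟨hmc, hmmin⟩ := hm
      have hxi : ((k+1) • Pi.single i 1 + emb i m : Fin (d+1) → ℕ) i = k + 1 :=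
        app_i i (k+1) m
      have hxr : i.removeNth ((k+1) • Pi.single i 1 + emb i m) = m := by
        rw [rm_add, rm_smul, rm_emb, zero_add]
      refine ⟨⟨?_, ?_⟩, ?_⟩
      · rw [mem_thick]; right; rw [hxi]
      · intro h
        have := congrFun h i
        rw [hxi] at this
        simp at this
      · rintro ⟨a, ⟨haT, ha0⟩, b, ⟨hbT, hb0⟩, hab⟩
        rw [mem_thick] at haT hbT
        have hic := congrFun hab i
        rw [hxi] at hic
        have hrc : i.removeNth a + i.removeNth b = m := by
          rw [← rm_add, ← hab, hxr]
        have hle_a : i.removeNth a ≤ m := by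
          intro l; rw [← hrc]; simp [Fin.removeNth]
        have hle_b : i.removeNth b ≤ m := by
          intro l; rw [← hrc]; simp [Fin.removeNth]
        rcases Nat.lt_or_ge (a i) (k+1) with hak | hak
        · rcases Nat.lt_or_ge (b i) (k+1) with hbk | hbk
          · have haS : i.removeNth a ∈ S := by
              rcases haT with ⟨_, h⟩ | h; exact h; omega
            have hbS : i.removeNth b ∈ S := by
              rcases hbT with ⟨_, h⟩ | h; exact h; omega
            have ha' := hmmin _ haS hle_a
            have hb' := hmmin _ hbS hle_b
            rw [ha', hb'] at hrc
            simp at hrc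
            exact hmc (hrc ▸ h0)
          · -- b i ≥ k+1 so a i = 0
            have hai : a i = 0 := by simp at hic; omega
            have haS : i.removeNth a ∈ S := by
              rcases haT with ⟨_, h⟩ | h; exact h; omega
            have := hmmin _ haS hle_a
            exact ha0 ((eq_zero_iff i a).mpr ⟨hai, this⟩)
        · have hbi : b i = 0 := by simp at hic; omega
          have hbS : i.removeNth b ∈ S := by
            rcases hbT with ⟨_, h⟩ | h; exact h; omega
          have := hmmin _ hbS hle_b
          exact hb0 ((eq_zero_iff i b).mpr ⟨hbi, this⟩)
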